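/- The perspective function h(a,b) defined as |a|^p / b^{p-1} for b > 0, 0 for a = b = 0, and +∞ otherwise, is convex on ℝ × ℝ for every p ≥ 1. -/

import Mathlib

open scoped ENNReal

/-- The perspective function `h(a,b) = |a|^p / b^(p-1)` for `b > 0`, `0` at `(0,0)`,
and `+∞` otherwise. -/
noncomputable def perspective (p : ℝ) (a b : ℝ) : ℝ≥0∞ :=
  if 0 < b then ENNReal.ofReal (|a| ^ p / b ^ (p - 1))
  else if a = 0 ∧ b = 0 then 0 else ⊤

lemma perspective_pos_eq {p a b : ℝ} (hb : 0 < b) :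
    perspective p a b = ENNReal.ofReal (|a| ^ p / b ^ (p - 1)) := if_pos hb

lemma perspective_zero {p : ℝ} : perspective p 0 0 = 0 := by simp [perspective]

lemma perspective_ne_top {p a b : ℝ} (h : perspective p a b ≠ ⊤) :
    0 < b ∨ (a = 0 ∧ b = 0) := by
  unfold perspective at h
  split_ifs at h with h1 h2
  · exact Or.inl h1
  · exact Or.inr h2
  · exact absurd rfl h

lemma perspective_smul {p : ℝ} (t a b : ℝ) (ht : 0 < t) (hb : 0 < b) :
    perspective p (t * a) (t * b) = ENNReal.ofReal t * perspective p a b := by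
  rw [perspective_pos_eq (mul_pos ht hb), perspective_pos_eq hb, ← ENNReal.ofReal_mul ht.le]
  congr 1
  rw [abs_mul, abs_of_pos ht, Real.mul_rpow ht.le (abs_nonneg a), Real.mul_rpow ht.le hb.le,
    mul_div_mul_comm, ← Real.rpow_sub ht, sub_sub_cancel, Real.rpow_one]

lemma perspective_main_ineq (p a₁ b₁ a₂ b₂ t : ℝ) (hp : 1 ≤ p) (ht0 : 0 < t) (ht1 : t < 1)
    (hb₁ : 0 < b₁) (hb₂ : 0 < b₂) :
    |t * a₁ + (1 - t) * a₂| ^ p / (t * b₁ + (1 - t) * b₂) ^ (p - 1)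
      ≤ t * (|a₁| ^ p / b₁ ^ (p - 1)) + (1 - t) * (|a₂| ^ p / b₂ ^ (p - 1)) := by
  have ht1' : 0 < 1 - t := by linarith
  set b := t * b₁ + (1 - t) * b₂ with hbdef
  have hb : 0 < b := add_pos (mul_pos ht0 hb₁) (mul_pos ht1' hb₂)
  set l := t * b₁ / b with hldef
  have hl0 : 0 ≤ l := by positivity
  have hl' : 1 - l = (1 - t) * b₂ / b := by
    rw [hldef, eq_div_iff hb.ne', sub_mul, div_mul_cancel₀ _ hb.ne', hbdef]; ring
  have hm0 : 0 ≤ 1 - l := by rw [hl']; positivity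
  have key := (convexOn_rpow hp).2 (Set.mem_Ici.mpr (div_nonneg (abs_nonneg a₁) hb₁.le))
    (Set.mem_Ici.mpr (div_nonneg (abs_nonneg a₂) hb₂.le)) hl0 hm0 (by ring)
  simp only [smul_eq_mul] at key
  have e1 : l * (|a₁| / b₁) + (1 - l) * (|a₂| / b₂) = (t * |a₁| + (1 - t) * |a₂|) / b := by
    rw [hl', hldef]; field_simp
  have e2 : l * (|a₁| / b₁) ^ p + (1 - l) * (|a₂| / b₂) ^ p
      = (t * (|a₁| ^ p / b₁ ^ (p - 1)) + (1 - t) * (|a₂| ^ p / b₂ ^ (p - 1))) / b := by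
    rw [hl', hldef, Real.div_rpow (abs_nonneg a₁) hb₁.le, Real.div_rpow (abs_nonneg a₂) hb₂.le]
    have h1 : b₁ ^ p = b₁ ^ (p - 1) * b₁ := by rw [← Real.rpow_add_one hb₁.ne', sub_add_cancel]
    have h2 : b₂ ^ p = b₂ ^ (p - 1) * b₂ := by rw [← Real.rpow_add_one hb₂.ne', sub_add_cancel]
    have hd1 : (0:ℝ) < b₁ ^ (p - 1) := Real.rpow_pos_of_pos hb₁ _
    have hd2 : (0:ℝ) < b₂ ^ (p - 1) := Real.rpow_pos_of_pos hb₂ _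
    rw [h1, h2]
    field_simp
  rw [e1, e2] at key
  have habs : |t * a₁ + (1 - t) * a₂| ≤ t * |a₁| + (1 - t) * |a₂| := by
    calc |t * a₁ + (1 - t) * a₂| ≤ |t * a₁| + |(1 - t) * a₂| := abs_add_le _ _
    _ = t * |a₁| + (1 - t) * |a₂| := by
        rw [abs_mul, abs_mul, abs_of_pos ht0, abs_of_pos ht1']
  have step1 : |t * a₁ + (1 - t) * a₂| ^ p ≤ (t * |a₁| + (1 - t) * |a₂|) ^ p :=
    Real.rpow_le_rpow (abs_nonneg _) habs (by linarith)
  have e3 : (t * |a₁| + (1 - t) * |a₂|) ^ p / b ^ (p - 1)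
      = b * ((t * |a₁| + (1 - t) * |a₂|) / b) ^ p := by
    rw [Real.div_rpow (by positivity) hb.le]
    have hbp : b ^ p = b ^ (p - 1) * b := by rw [← Real.rpow_add_one hb.ne', sub_add_cancel]
    have hd : (0:ℝ) < b ^ (p - 1) := Real.rpow_pos_of_pos hb _
    rw [hbp]
    field_simp
  calc |t * a₁ + (1 - t) * a₂| ^ p / b ^ (p - 1)
      ≤ (t * |a₁| + (1 - t) * |a₂|) ^ p / b ^ (p - 1) :=
        div_le_div_of_nonneg_right ?_ ?_ |>.trans_eq rfl
    _ = b * ((t * |a₁| + (1 - t) * |a₂|) / b) ^ p := e3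
    _ ≤ b * ((t * (|a₁| ^ p / b₁ ^ (p - 1)) + (1 - t) * (|a₂| ^ p / b₂ ^ (p - 1))) / b) :=
        mul_le_mul_of_nonneg_left key hb.le
    _ = t * (|a₁| ^ p / b₁ ^ (p - 1)) + (1 - t) * (|a₂| ^ p / b₂ ^ (p - 1)) := by
        field_simp
  · exact step1
  · exact (Real.rpow_pos_of_pos hb _).le

/-- The perspective function is convex on `ℝ × ℝ` for every `p ≥ 1`. -/
theorem perspective_convex (p : ℝ) (hp : 1 ≤ p) :
    ∀ (a₁ b₁ a₂ b₂ t : ℝ), 0 ≤ t → t ≤ 1 →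
      perspective p (t * a₁ + (1 - t) * a₂) (t * b₁ + (1 - t) * b₂)
        ≤ ENNReal.ofReal t * perspective p a₁ b₁
          + ENNReal.ofReal (1 - t) * perspective p a₂ b₂ := by
  intro a₁ b₁ a₂ b₂ t ht0 ht1
  rcases ht0.eq_or_lt with rfl | ht0'
  · simp
  rcases ht1.eq_or_lt with rfl | ht1'
  · simp
  by_cases hP₁ : perspective p a₁ b₁ = ⊤
  · have : ENNReal.ofReal t * perspective p a₁ b₁ = ⊤ := by
      rw [hP₁, ENNReal.mul_top (ENNReal.ofReal_pos.mpr ht0').ne']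
    simp [this]
  by_cases hP₂ : perspective p a₂ b₂ = ⊤
  · have h1t : (0:ℝ) < 1 - t := by linarith
    have : ENNReal.ofReal (1 - t) * perspective p a₂ b₂ = ⊤ := by
      rw [hP₂, ENNReal.mul_top (ENNReal.ofReal_pos.mpr h1t).ne']
    simp [this]
  have ht1'' : (0:ℝ) < 1 - t := by linarith
  rcases perspective_ne_top hP₁ with hb₁ | ⟨rfl, rfl⟩
  · rcases perspective_ne_top hP₂ with hb₂ | ⟨rfl, rfl⟩
    · have hbpos : 0 < t * b₁ + (1 - t) * b₂ :=
        add_pos (mul_pos ht0' hb₁) (mul_pos ht1'' hb₂)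
      rw [perspective_pos_eq hbpos, perspective_pos_eq hb₁, perspective_pos_eq hb₂,
        ← ENNReal.ofReal_mul ht0'.le, ← ENNReal.ofReal_mul ht1''.le,
        ← ENNReal.ofReal_add
          (mul_nonneg ht0'.le (div_nonneg (Real.rpow_nonneg (abs_nonneg _) _)
            (Real.rpow_nonneg hb₁.le _)))
          (mul_nonneg ht1''.le (div_nonneg (Real.rpow_nonneg (abs_nonneg _) _)
            (Real.rpow_nonneg hb₂.le _)))]
      exact ENNReal.ofReal_le_ofReal
        (perspective_main_ineq p a₁ b₁ a₂ b₂ t hp ht0' ht1' hb₁ hb₂)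
    · simp only [mul_zero, add_zero]
      rw [perspective_smul t a₁ b₁ ht0' hb₁, perspective_zero]
      simp
  · rcases perspective_ne_top hP₂ with hb₂ | ⟨rfl, rfl⟩
    · simp only [mul_zero, zero_add]
      rw [perspective_smul (1 - t) a₂ b₂ ht1'' hb₂, perspective_zero]
      simp
    · simp [perspective]
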